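/- Let X be a topological space, C₊ := ℝ≥0 × X with the product topology, A ∈ ℂ, ν : C₊ → ℂ continuous with ν(0, x̂₀) ≠ 0 for some x̂₀ ∈ X, and let ψ = (ψₘ) be a component family with each ψₘ symmetric and continuous. If for some N ≥ 1 the pairing F_N[ψ] vanishes identically on C₊^N, then Fₙ[ψ] vanishes identically on C₊^n for every n ≤ N. (This is the computational core of the paper's Corollary: for nonzero memory, vanishing of the overlap with all BMS N-particle states forces vanishing of the overlaps with all BMS n-particle states for n < N.) -/

import Mathlib

open scoped BigOperators

noncomputable section

/-- The space `C₊ = ℝ≥0 × X` of null momenta: a frequency `ω ∈ ℝ≥0` and an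
angular direction in `X`. -/
abbrev Cplus (X : Type*) := NNReal × X

/-- A component family is symmetric if each component `ψₘ` is invariant under
precomposition with permutations of `Fin m`. -/
def IsSymmFamily {X : Type*} (ψ : ∀ m : ℕ, (Fin m → Cplus X) → ℂ) : Prop :=
  ∀ (m : ℕ) (σ : Equiv.Perm (Fin m)) (p : Fin m → Cplus X), ψ m (p ∘ σ) = ψ m p

/-- The BMS-particle pairing
`Fₙ[ψ](p) = A · Σ_{m=0}^{n} (16π)^m √(n!/m!) (1/(n−m)!) (1/n!)
  Σ_{σ ∈ Perm(Fin n)} (Π_{i=1}^{m} ω(p_{σ(i)})) ψₘ(p_{σ(1)},…,p_{σ(m)})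
  Π_{i=m+1}^{n} ν(p_{σ(i)})`. -/
def pairing {X : Type*} (A : ℂ) (ν : Cplus X → ℂ)
    (ψ : ∀ m : ℕ, (Fin m → Cplus X) → ℂ) (n : ℕ) (p : Fin n → Cplus X) : ℂ :=
  A * ∑ m : Fin (n + 1),
    (((16 * Real.pi) ^ (m : ℕ) * Real.sqrt ((n.factorial : ℝ) / ((m : ℕ).factorial : ℝ))
        / ((n - (m : ℕ)).factorial : ℝ) / (n.factorial : ℝ) : ℝ) : ℂ) *
      ∑ σ : Equiv.Perm (Fin n),
        (∏ i : Fin n,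
          (if (i : ℕ) < (m : ℕ) then (((p (σ i)).1 : ℝ) : ℂ) else ν (p (σ i)))) *
        ψ (m : ℕ) (fun i : Fin (m : ℕ) => p (σ (Fin.castLE (Nat.lt_succ_iff.mp m.isLt) i)))

/-! ### auxiliary machinery -/

def permExt (n : ℕ) (jτ : Fin (n+1) × Equiv.Perm (Fin n)) : Equiv.Perm (Fin (n+1)) :=
  ((finSuccEquiv' jτ.1).trans (Equiv.optionCongr jτ.2)).trans (finSuccEquiv n).symm

lemma permExt_self (n : ℕ) (j : Fin (n+1)) (τ : Equiv.Perm (Fin n)) :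
    permExt n (j, τ) j = 0 := by
  simp [permExt, finSuccEquiv'_at, finSuccEquiv_symm_none]

lemma permExt_succAbove (n : ℕ) (j : Fin (n+1)) (τ : Equiv.Perm (Fin n)) (k : Fin n) :
    permExt n (j, τ) (j.succAbove k) = (τ k).succ := by
  simp [permExt, finSuccEquiv'_succAbove, finSuccEquiv_symm_some]

lemma permExt_bijective (n : ℕ) : Function.Bijective (permExt n) := by
  rw [Fintype.bijective_iff_injective_and_card]
  constructor
  · rintro ⟨j, τ⟩ ⟨j', τ'⟩ h
    have hj : j = j' := by
      have h1 : permExt n (j', τ') j = 0 := by rw [← h]; exact permExt_self n j τ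
      have h2 : permExt n (j', τ') j' = 0 := permExt_self n j' τ'
      exact (permExt n (j', τ')).injective (h1.trans h2.symm)
    subst hj
    have hτ : τ = τ' := by
      ext k
      have h1 : permExt n (j, τ) (j.succAbove k) = permExt n (j, τ') (j.succAbove k) := by
        rw [h]
      rw [permExt_succAbove, permExt_succAbove] at h1
      exact congrArg Fin.val (Fin.succ_injective _ h1)
    rw [hτ]
  · simp [Fintype.card_perm, Nat.factorial_succ]

lemma sum_perm_split {M : Type*} [AddCommMonoid M] (n : ℕ)
    (f : Equiv.Perm (Fin (n+1)) → M) :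
    ∑ σ : Equiv.Perm (Fin (n+1)), f σ
      = ∑ j : Fin (n+1), ∑ τ : Equiv.Perm (Fin n), f (permExt n (j, τ)) := by
  have h := Fintype.sum_bijective (permExt n) (permExt_bijective n)
    (fun jτ => f (permExt n jτ)) f (fun x => rfl)
  rw [← h, Fintype.sum_prod_type]

lemma succAbove_val_lt_iff {n m : ℕ} (j : Fin (n+1)) (hj : m ≤ (j:ℕ)) (k : Fin n) :
    ((j.succAbove k : Fin (n+1)) : ℕ) < m ↔ (k:ℕ) < m := by
  rcases lt_or_ge ((k:ℕ)) ((j:ℕ)) with h | h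
  · rw [Fin.succAbove_of_castSucc_lt _ _ (by simpa [Fin.lt_def] using h)]
    simp
  · rw [Fin.succAbove_of_le_castSucc _ _ (by simpa [Fin.le_def] using h)]
    simp only [Fin.val_succ]
    omega

lemma card_not_lt (n m : ℕ) (hm : m ≤ n) :
    (Finset.univ.filter (fun j : Fin (n+1) => ¬ ((j:ℕ) < m))).card = n + 1 - m := by
  have : (Finset.univ.filter (fun j : Fin (n+1) => ¬ ((j:ℕ) < m)))
      = Finset.Ici (⟨m, by omega⟩ : Fin (n+1)) := by
    ext j
    simp [Fin.le_def, Nat.not_lt]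
  rw [this, Fin.card_Ici]

lemma coeff_identity (n m : ℕ) (hm : m ≤ n) :
    ((16 * Real.pi) ^ m * Real.sqrt (((n+1).factorial : ℝ) / (m.factorial : ℝ))
        / ((n + 1 - m).factorial : ℝ) / ((n+1).factorial : ℝ)) * ((n + 1 - m : ℕ) : ℝ)
      = (Real.sqrt (n+1))⁻¹ *
        ((16 * Real.pi) ^ m * Real.sqrt ((n.factorial : ℝ) / (m.factorial : ℝ))
          / ((n - m).factorial : ℝ) / (n.factorial : ℝ)) := by
  have hfac1 : ((n+1).factorial : ℝ) = (n+1) * n.factorial := by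
    rw [Nat.factorial_succ]; push_cast; ring
  have hsub : n + 1 - m = (n - m) + 1 := by omega
  have hfac2 : ((n+1-m).factorial : ℝ) = (n+1-m : ℕ) * (n-m).factorial := by
    rw [hsub, Nat.factorial_succ]; push_cast [hsub]; ring
  have hss : Real.sqrt ((n:ℝ)+1) * Real.sqrt ((n:ℝ)+1) = (n:ℝ)+1 :=
    Real.mul_self_sqrt (by positivity)
  have hsqrt : Real.sqrt (((n+1).factorial : ℝ) / (m.factorial : ℝ))
      = Real.sqrt ((n:ℝ)+1) * Real.sqrt ((n.factorial : ℝ) / (m.factorial : ℝ)) := by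
    rw [hfac1, mul_div_assoc, Real.sqrt_mul (by positivity)]
  have h1 : Real.sqrt ((n:ℝ)+1) ≠ 0 := by positivity
  have h2 : ((n+1-m : ℕ) : ℝ) ≠ 0 := by
    have : 0 < n + 1 - m := by omega
    positivity
  have h3 : ((n.factorial : ℕ) : ℝ) ≠ 0 := by positivity
  have h4 : (((n-m).factorial : ℕ) : ℝ) ≠ 0 := by positivity
  have hdiv : Real.sqrt ((n.factorial:ℝ)/(m.factorial:ℝ))
      = Real.sqrt (n.factorial:ℝ) / Real.sqrt (m.factorial:ℝ) :=
    Real.sqrt_div (by positivity) _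
  have h5 : Real.sqrt (m.factorial:ℝ) ≠ 0 := by positivity
  rw [hsqrt, hdiv, hfac2, hfac1]
  field_simp
  linear_combination hss

/-! ### clean reformulation of the pairing -/

def innerSum {X : Type*} (ν : Cplus X → ℂ) (ψ : ∀ m : ℕ, (Fin m → Cplus X) → ℂ)
    (n : ℕ) (p : Fin n → Cplus X) (m : ℕ) : ℂ :=
  if h : m ≤ n then
    ∑ σ : Equiv.Perm (Fin n),
      (∏ i : Fin n, (if (i:ℕ) < m then (((p (σ i)).1 : ℝ):ℂ) else ν (p (σ i)))) *
        ψ m (fun i : Fin m => p (σ (Fin.castLE h i)))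
  else 0

def coeff (n m : ℕ) : ℝ :=
  (16 * Real.pi) ^ m * Real.sqrt ((n.factorial : ℝ) / (m.factorial : ℝ))
    / ((n - m).factorial : ℝ) / (n.factorial : ℝ)

lemma pairing_eq {X : Type*} (A : ℂ) (ν : Cplus X → ℂ)
    (ψ : ∀ m : ℕ, (Fin m → Cplus X) → ℂ) (n : ℕ) (p : Fin n → Cplus X) :
    pairing A ν ψ n p
      = A * ∑ m ∈ Finset.range (n+1), ((coeff n m : ℝ) : ℂ) * innerSum ν ψ n p m := by
  rw [pairing, ← Fin.sum_univ_eq_sum_range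
    (fun m => ((coeff n m : ℝ) : ℂ) * innerSum ν ψ n p m) (n+1)]
  congr 1
  apply Finset.sum_congr rfl
  intro m _
  rw [innerSum, dif_pos (Nat.lt_succ_iff.mp m.isLt), coeff]

/-! ### the key computation -/

lemma innerSum_top {X : Type*} (ν : Cplus X → ℂ) (x₀ : X)
    (ψ : ∀ m : ℕ, (Fin m → Cplus X) → ℂ) (n : ℕ) (p : Fin n → Cplus X) :
    innerSum ν ψ (n+1) (Fin.cases ((0:NNReal), x₀) p) (n+1) = 0 := by
  rw [innerSum, dif_pos le_rfl]
  apply Finset.sum_eq_zero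
  intro σ _
  rw [Finset.prod_eq_zero (Finset.mem_univ (σ⁻¹ 0)), zero_mul]
  rw [if_pos (σ⁻¹ 0).isLt, Equiv.Perm.coe_inv, Equiv.apply_symm_apply]
  simp

lemma innerSum_main {X : Type*} (ν : Cplus X → ℂ) (x₀ : X)
    (ψ : ∀ m : ℕ, (Fin m → Cplus X) → ℂ) (n : ℕ) (p : Fin n → Cplus X)
    (m : ℕ) (hm : m ≤ n) :
    innerSum ν ψ (n+1) (Fin.cases ((0:NNReal), x₀) p) m
      = ((n + 1 - m : ℕ) : ℂ) * (ν ((0:NNReal), x₀) * innerSum ν ψ n p m) := by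
  set z : Cplus X := ((0:NNReal), x₀) with hz
  set q : Fin (n+1) → Cplus X := Fin.cases z p with hq
  rw [innerSum, dif_pos (by omega : m ≤ n + 1), innerSum, dif_pos hm]
  rw [sum_perm_split]
  have hj : ∀ j : Fin (n+1),
      (∑ τ : Equiv.Perm (Fin n),
        (∏ i : Fin (n+1), (if (i:ℕ) < m then (((q ((permExt n (j,τ)) i)).1 : ℝ):ℂ)
            else ν (q ((permExt n (j,τ)) i)))) *
          ψ m (fun i : Fin m => q ((permExt n (j,τ)) (Fin.castLE (by omega : m ≤ n+1) i))))
      = if (j:ℕ) < m then 0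
        else ν z * ∑ τ : Equiv.Perm (Fin n),
          (∏ i : Fin n, (if (i:ℕ) < m then (((p (τ i)).1 : ℝ):ℂ) else ν (p (τ i)))) *
            ψ m (fun i : Fin m => p (τ (Fin.castLE hm i))) := by
    intro j
    by_cases hjm : (j:ℕ) < m
    · rw [if_pos hjm]
      apply Finset.sum_eq_zero
      intro τ _
      rw [Finset.prod_eq_zero (Finset.mem_univ j), zero_mul]
      rw [if_pos hjm, permExt_self]
      simp [hq, hz]
    · rw [if_neg hjm, Finset.mul_sum]
      apply Finset.sum_congr rfl
      intro τ _
      have hmj : m ≤ (j:ℕ) := Nat.not_lt.mp hjm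
      have hprod : (∏ i : Fin (n+1), (if (i:ℕ) < m then (((q ((permExt n (j,τ)) i)).1 : ℝ):ℂ)
            else ν (q ((permExt n (j,τ)) i))))
          = ν z * ∏ i : Fin n, (if (i:ℕ) < m then (((p (τ i)).1 : ℝ):ℂ) else ν (p (τ i))) := by
        rw [Fin.prod_univ_succAbove (fun i : Fin (n+1) =>
          (if (i:ℕ) < m then (((q ((permExt n (j,τ)) i)).1 : ℝ):ℂ)
            else ν (q ((permExt n (j,τ)) i)))) j]
        congr 1
        · rw [if_neg hjm, permExt_self]
          simp [hq, hz]
        · apply Finset.prod_congr rfl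
          intro k _
          rw [permExt_succAbove]
          have hqs : q ((τ k).succ) = p (τ k) := by simp [hq]
          by_cases hk : (k:ℕ) < m
          · rw [if_pos ((succAbove_val_lt_iff j hmj k).mpr hk), if_pos hk, hqs]
          · rw [if_neg (fun h => hk ((succAbove_val_lt_iff j hmj k).mp h)), if_neg hk, hqs]
      have hpsi : (fun i : Fin m => q ((permExt n (j,τ)) (Fin.castLE (by omega : m ≤ n+1) i)))
          = fun i : Fin m => p (τ (Fin.castLE hm i)) := by
        funext i
        have hc : (Fin.castLE (by omega : m ≤ n+1) i : Fin (n+1))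
            = j.succAbove (Fin.castLE hm i) := by
          rw [Fin.succAbove_of_castSucc_lt _ _ (by
            simp only [Fin.lt_def, Fin.coe_castSucc, Fin.coe_castLE]
            omega)]
          ext
          simp
        rw [hc, permExt_succAbove]
        simp [hq]
      rw [hprod, hpsi]
      ring
  rw [Finset.sum_congr rfl (fun j _ => hj j)]
  rw [Finset.sum_ite, Finset.sum_const_zero, zero_add, Finset.sum_const,
    card_not_lt n m hm, nsmul_eq_mul]

lemma key_step {X : Type*} (A : ℂ) (ν : Cplus X → ℂ) (x₀ : X)
    (ψ : ∀ m : ℕ, (Fin m → Cplus X) → ℂ) (n : ℕ) (p : Fin n → Cplus X) :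
    pairing A ν ψ (n+1) (Fin.cases ((0:NNReal), x₀) p)
      = ν ((0:NNReal), x₀) * (((Real.sqrt ((n:ℝ)+1))⁻¹ : ℝ) : ℂ) * pairing A ν ψ n p := by
  rw [pairing_eq, pairing_eq, Finset.sum_range_succ, innerSum_top, mul_zero, add_zero]
  have : ∀ m ∈ Finset.range (n+1),
      ((coeff (n+1) m : ℝ) : ℂ) * innerSum ν ψ (n+1) (Fin.cases ((0:NNReal), x₀) p) m
        = ν ((0:NNReal), x₀) * (((Real.sqrt ((n:ℝ)+1))⁻¹ : ℝ) : ℂ)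
            * (((coeff n m : ℝ) : ℂ) * innerSum ν ψ n p m) := by
    intro m hmr
    have hm : m ≤ n := Nat.lt_succ_iff.mp (Finset.mem_range.mp hmr)
    rw [innerSum_main ν x₀ ψ n p m hm]
    have hre := coeff_identity n m hm
    have hce := congrArg (Complex.ofReal) hre
    push_cast at hce ⊢
    simp only [coeff] at *
    push_cast at hce ⊢
    linear_combination (ν ((0:NNReal), x₀) * innerSum ν ψ n p m) * hce
  rw [Finset.sum_congr rfl this]
  rw [← Finset.mul_sum]
  ring

/-- **Corollary (computational core)**: for nonzero memory (`ν(0,x̂₀) ≠ 0` for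
some direction `x̂₀`), if the pairing with all BMS `N`-particle states vanishes
identically for some `N ≥ 1`, then the pairing with all BMS `n`-particle states
vanishes identically for every `n ≤ N`. -/
theorem bms_vanishing_descends
    {X : Type*} [TopologicalSpace X] (A : ℂ) (ν : Cplus X → ℂ) (hν : Continuous ν)
    (x₀ : X) (hx₀ : ν (0, x₀) ≠ 0)
    (ψ : ∀ m : ℕ, (Fin m → Cplus X) → ℂ) (hsym : IsSymmFamily ψ)
    (hcont : ∀ m, Continuous (ψ m))
    (N : ℕ) (hN : 1 ≤ N)
    (hvanish : ∀ p : Fin N → Cplus X, pairing A ν ψ N p = 0) :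
    ∀ n ≤ N, ∀ p : Fin n → Cplus X, pairing A ν ψ n p = 0 := by
  have step : ∀ n : ℕ, (∀ p : Fin (n+1) → Cplus X, pairing A ν ψ (n+1) p = 0) →
      ∀ p : Fin n → Cplus X, pairing A ν ψ n p = 0 := by
    intro n h p
    have hk := key_step A ν x₀ ψ n p
    rw [h _] at hk
    have hs : (((Real.sqrt ((n:ℝ)+1))⁻¹ : ℝ) : ℂ) ≠ 0 := by
      have : Real.sqrt ((n:ℝ)+1) ≠ 0 := by positivity
      simp [this]
    rcases mul_eq_zero.mp hk.symm with h1 | h2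
    · rcases mul_eq_zero.mp h1 with h3 | h4
      · exact absurd h3 hx₀
      · exact absurd h4 hs
    · exact h2
  have main : ∀ k : ℕ, ∀ p : Fin (N - k) → Cplus X, pairing A ν ψ (N - k) p = 0 := by
    intro k
    induction k with
    | zero => exact hvanish
    | succ k ih =>
      by_cases hk : k < N
      · have hEq : N - k = (N - (k+1)) + 1 := by omega
        rw [hEq] at ih
        exact step _ ih
      · have hEq : N - (k+1) = N - k := by omega
        rw [hEq]
        exact ih
  intro n hn p
  have h := main (N - n)
  have h2 : N - (N - n) = n := by omega
  rw [h2] at h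
  exact h p


end
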